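/- Let n ≥ 1 and let N be an algebra norm on M_n. Then N is an induced norm (i.e., there is a norm ‖·‖₀ on ℂⁿ with N(A) = max{‖Ax‖₀ : ‖x‖₀ = 1} for all A) if and only if N is a minimal element of the set of all algebra norms on M_n, i.e., for every algebra norm ‖·‖ on M_n with ‖A‖ ≤ N(A) for all A one has ‖A‖ = N(A) for all A. -/

import Mathlib

open Matrix

/-- `ν` is a norm on `ℂⁿ`. -/
def IsNormCn {n : ℕ} (ν : (Fin n → ℂ) → ℝ) : Prop :=
  (∀ x, ν x = 0 ↔ x = 0) ∧
  (∀ (c : ℂ) (x), ν (c • x) = ‖c‖ * ν x) ∧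
  (∀ x y, ν (x + y) ≤ ν x + ν y)

/-- `N` is a norm on the n×n complex matrices. -/
def IsNormMn {n : ℕ} (N : Matrix (Fin n) (Fin n) ℂ → ℝ) : Prop :=
  (∀ A, N A = 0 ↔ A = 0) ∧
  (∀ (c : ℂ) (A), N (c • A) = ‖c‖ * N A) ∧
  (∀ A B, N (A + B) ≤ N A + N B)

/-- `N` is a minimal norm on `M_n`: any norm dominated by `N` equals `N`. -/
def IsMinimalNorm {n : ℕ} (N : Matrix (Fin n) (Fin n) ℂ → ℝ) : Prop :=
  ∀ N' : Matrix (Fin n) (Fin n) ℂ → ℝ,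
    IsNormMn N' → (∀ A, N' A ≤ N A) → ∀ A, N' A = N A

/-- The generalized induced norm `‖A‖_{1,2} = max{‖Ax‖₂ : ‖x‖₁ = 1}`. -/
noncomputable def gind {n : ℕ} (ν₁ ν₂ : (Fin n → ℂ) → ℝ)
    (A : Matrix (Fin n) (Fin n) ℂ) : ℝ :=
  sSup {r : ℝ | ∃ x : Fin n → ℂ, ν₁ x = 1 ∧ r = ν₂ (A.mulVec x)}

/-- `C_x`: the matrix all of whose columns equal `x`, i.e. `y ↦ (∑ j, y j) • x`. -/
def Cmat {n : ℕ} (x : Fin n → ℂ) : Matrix (Fin n) (Fin n) ℂ :=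
  Matrix.of fun i _ => x i

/-! ### Auxiliary material -/

section Aux

variable {n : ℕ}

lemma IsNormCn.zero {ν : (Fin n → ℂ) → ℝ} (hν : IsNormCn ν) : ν 0 = 0 :=
  (hν.1 0).mpr rfl

lemma IsNormCn.nonneg {ν : (Fin n → ℂ) → ℝ} (hν : IsNormCn ν) (x : Fin n → ℂ) :
    0 ≤ ν x := by
  have hneg : ν (-x) = ν x := by
    have := hν.2.1 (-1) x; simpa using this
  have h := hν.2.2 x (-x)
  rw [add_neg_cancel, hν.zero, hneg] at h
  linarith

lemma IsNormMn.zero {N : Matrix (Fin n) (Fin n) ℂ → ℝ} (hN : IsNormMn N) : N 0 = 0 :=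
  (hN.1 0).mpr rfl

lemma IsNormMn.nonneg {N : Matrix (Fin n) (Fin n) ℂ → ℝ} (hN : IsNormMn N)
    (A : Matrix (Fin n) (Fin n) ℂ) : 0 ≤ N A := by
  have hneg : N (-A) = N A := by
    have := hN.2.1 (-1) A; simpa using this
  have h := hN.2.2 A (-A)
  rw [add_neg_cancel, hN.zero, hneg] at h
  linarith

lemma norm_real_inv_coe {r : ℝ} (hr : 0 ≤ r) : ‖((r⁻¹ : ℝ) : ℂ)‖ = r⁻¹ := by
  rw [Complex.norm_real, Real.norm_eq_abs, abs_of_nonneg (by positivity)]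

lemma IsNormCn.normalize {ν : (Fin n → ℂ) → ℝ} (hν : IsNormCn ν) {x : Fin n → ℂ}
    (hx : x ≠ 0) : ν ((((ν x)⁻¹ : ℝ) : ℂ) • x) = 1 := by
  have hνx : ν x ≠ 0 := fun h => hx ((hν.1 x).mp h)
  rw [hν.2.1, norm_real_inv_coe (hν.nonneg x), inv_mul_cancel₀ hνx]

lemma IsNormCn.pos {ν : (Fin n → ℂ) → ℝ} (hν : IsNormCn ν) {x : Fin n → ℂ}
    (hx : x ≠ 0) : 0 < ν x :=
  lt_of_le_of_ne (hν.nonneg x) (Ne.symm (fun h => hx ((hν.1 x).mp h)))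

lemma IsNormCn.exists_unit {ν : (Fin n → ℂ) → ℝ} (hν : IsNormCn ν) (hn : 1 ≤ n) :
    ∃ x, ν x = 1 := by
  have i0 : Fin n := ⟨0, hn⟩
  have hx : (Pi.single i0 1 : Fin n → ℂ) ≠ 0 := by
    intro h
    have := congrFun h i0
    simp at this
  exact ⟨_, hν.normalize hx⟩

/-- The rank one matrix `v fᵀ`. -/
def Rk (v f : Fin n → ℂ) : Matrix (Fin n) (Fin n) ℂ :=
  Matrix.of fun i j => v i * f j

lemma Rk_mulVec (v f u : Fin n → ℂ) :
    (Rk v f).mulVec u = (∑ j, f j * u j) • v := by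
  funext i
  show (∑ j, (v i * f j) * u j) = (∑ j, f j * u j) * v i
  rw [Finset.sum_mul]
  exact Finset.sum_congr rfl fun j _ => by ring

lemma mul_Rk (A : Matrix (Fin n) (Fin n) ℂ) (v f : Fin n → ℂ) :
    A * Rk v f = Rk (A.mulVec v) f := by
  ext i j
  show (∑ k, A i k * (v k * f j)) = (∑ k, A i k * v k) * f j
  rw [Finset.sum_mul]
  exact Finset.sum_congr rfl fun k _ => by ring

lemma Rk_mul_Rk (v f w h : Fin n → ℂ) :
    Rk v f * Rk w h = (∑ k, f k * w k) • Rk v h := by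
  ext i j
  show (∑ k, (v i * f k) * (w k * h j)) = (∑ k, f k * w k) * (v i * h j)
  rw [Finset.sum_mul]
  exact Finset.sum_congr rfl fun k _ => by ring

lemma lin_eq_sum (g : (Fin n → ℂ) →ₗ[ℂ] ℂ) (u : Fin n → ℂ) :
    (∑ j, g (Pi.single j 1) * u j) = g u := by
  conv_rhs => rw [← Finset.univ_sum_single u, map_sum]
  refine Finset.sum_congr rfl fun j _ => ?_
  have h1 : (Pi.single j (u j) : Fin n → ℂ) = u j • (Pi.single j (1:ℂ) : Fin n → ℂ) := by
    funext k
    by_cases hk : k = j <;> simp [Pi.single_apply, hk]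
  rw [h1, LinearMap.map_smul, smul_eq_mul, mul_comm]

lemma mul_Cmat (A : Matrix (Fin n) (Fin n) ℂ) (x : Fin n → ℂ) :
    A * Cmat x = Cmat (A.mulVec x) := by
  ext i j
  rfl

lemma Cmat_add (x y : Fin n → ℂ) : Cmat (x + y) = Cmat x + Cmat y := by
  ext i j; rfl

lemma Cmat_smul (c : ℂ) (x : Fin n → ℂ) : Cmat (c • x) = c • Cmat x := by
  ext i j; rfl

lemma Cmat_eq_zero (hn : 1 ≤ n) (x : Fin n → ℂ) : Cmat x = 0 ↔ x = 0 := by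
  constructor
  · intro h
    funext i
    have : Cmat x i ⟨0, hn⟩ = 0 := by rw [h]; rfl
    exact this
  · rintro rfl; ext i j; rfl

/-! ### Normed space structure attached to an abstract norm on `ℂⁿ` -/

/-- Type synonym of `Fin n → ℂ` carrying the norm `ν`. -/
def WN {n : ℕ} (ν : (Fin n → ℂ) → ℝ) : Type := Fin n → ℂ

variable (ν : (Fin n → ℂ) → ℝ)

instance : AddCommGroup (WN ν) := inferInstanceAs (AddCommGroup (Fin n → ℂ))
noncomputable instance : Module ℂ (WN ν) := inferInstanceAs (Module ℂ (Fin n → ℂ))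
instance : FiniteDimensional ℂ (WN ν) := inferInstanceAs (FiniteDimensional ℂ (Fin n → ℂ))

noncomputable instance [hf : Fact (IsNormCn ν)] : NormedAddCommGroup (WN ν) :=
  AddGroupNorm.toNormedAddCommGroup
  { toFun := ν
    map_zero' := hf.out.zero
    add_le' := hf.out.2.2
    neg' := fun x => by
      have := hf.out.2.1 (-1) x
      exact (congrArg ν (neg_one_smul ℂ (x : Fin n → ℂ)).symm).trans (this.trans (by simp))
    eq_zero_of_map_eq_zero' := fun x hx => (hf.out.1 x).mp hx }

noncomputable instance [hf : Fact (IsNormCn ν)] : NormedSpace ℂ (WN ν) :=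
  ⟨fun c x => le_of_eq (hf.out.2.1 c x)⟩

lemma WN.norm_def [Fact (IsNormCn ν)] (x : WN ν) : ‖x‖ = ν x := rfl

/-- The supremum in `gind` is attained. -/
lemma gind_exists_max {ν : (Fin n → ℂ) → ℝ} (hν : IsNormCn ν)
    (hex : ∃ x, ν x = 1) (A : Matrix (Fin n) (Fin n) ℂ) :
    ∃ x₀, ν x₀ = 1 ∧ gind ν ν A = ν (A.mulVec x₀) := by
  haveI : Fact (IsNormCn ν) := ⟨hν⟩
  let L : WN ν →ₗ[ℂ] WN ν :=
    { toFun := fun x => A.mulVec x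
      map_add' := fun x y => Matrix.mulVec_add A x y
      map_smul' := fun c x => Matrix.mulVec_smul A c x }
  have hc : Continuous fun x : WN ν => ‖L x‖ :=
    (LinearMap.continuous_of_finiteDimensional L).norm
  have hsph : (Metric.sphere (0 : WN ν) 1).Nonempty := by
    obtain ⟨x, hx⟩ := hex
    exact ⟨(x : WN ν), mem_sphere_zero_iff_norm.mpr hx⟩
  obtain ⟨x₀, hx₀mem, hmax⟩ :=
    (isCompact_sphere (0 : WN ν) 1).exists_isMaxOn hsph hc.continuousOn
  have hx₀ : ν x₀ = 1 := mem_sphere_zero_iff_norm.mp hx₀mem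
  refine ⟨x₀, hx₀, ?_⟩
  have hkey : ∀ x : Fin n → ℂ, ν x = 1 → ν (A.mulVec x) ≤ ν (A.mulVec x₀) := by
    intro x hx
    have hxmem : (x : WN ν) ∈ Metric.sphere (0 : WN ν) 1 :=
      mem_sphere_zero_iff_norm.mpr hx
    have h2 : ‖L (x : WN ν)‖ ≤ ‖L (x₀ : WN ν)‖ := hmax hxmem
    exact h2
  apply le_antisymm
  · exact Real.sSup_le (by rintro r ⟨x, hx, rfl⟩; exact hkey x hx)
      (hν.nonneg _)
  · exact le_csSup ⟨ν (A.mulVec x₀), by rintro r ⟨x, hx, rfl⟩; exact hkey x hx⟩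
      ⟨x₀, hx₀, rfl⟩

/-- Hahn–Banach / dual attainment for an abstract norm on `ℂⁿ`. -/
lemma exists_dual_functional {ν : (Fin n → ℂ) → ℝ} (hν : IsNormCn ν)
    (z : Fin n → ℂ) (hz : z ≠ 0) :
    ∃ g : (Fin n → ℂ) →ₗ[ℂ] ℂ, (∀ u, ‖g u‖ ≤ ν u) ∧ g z = ((ν z : ℝ) : ℂ) := by
  haveI : Fact (IsNormCn ν) := ⟨hν⟩
  let z' : WN ν := z
  have hz' : z' ≠ 0 := hz
  obtain ⟨g, hg1, hgz⟩ := exists_dual_vector ℂ z' (norm_ne_zero_iff.mpr hz')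
  refine ⟨(g.toLinearMap : WN ν →ₗ[ℂ] ℂ), fun u => ?_, ?_⟩
  · have h2 : ‖g (id u : WN ν)‖ ≤ ‖g‖ * ‖(id u : WN ν)‖ := g.le_opNorm _
    rw [hg1, one_mul] at h2
    exact h2
  · exact hgz

end Aux

theorem algebra_norm_induced_iff_minimal (n : ℕ) (hn : 1 ≤ n)
    (N : Matrix (Fin n) (Fin n) ℂ → ℝ) (hN : IsNormMn N)
    (halg : ∀ A B : Matrix (Fin n) (Fin n) ℂ, N (A * B) ≤ N A * N B) :
    (∃ ν₀ : (Fin n → ℂ) → ℝ, IsNormCn ν₀ ∧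
        ∀ A : Matrix (Fin n) (Fin n) ℂ, N A = gind ν₀ ν₀ A) ↔
      (∀ N' : Matrix (Fin n) (Fin n) ℂ → ℝ, IsNormMn N' →
        (∀ A B, N' (A * B) ≤ N' A * N' B) →
        (∀ A, N' A ≤ N A) → ∀ A, N' A = N A) := by
  constructor
  · -- induced norms are minimal
    rintro ⟨ν, hν, hNg⟩ N' hN' hN'alg hle A
    refine le_antisymm (hle A) ?_
    by_cases hA : A = 0
    · subst hA
      rw [hN.zero, hN'.zero]
    -- maximizer
    obtain ⟨x₀, hx₀, hmax⟩ := gind_exists_max hν (hν.exists_unit hn) A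
    have hNA : N A = ν (A.mulVec x₀) := (hNg A).trans hmax
    set z := A.mulVec x₀ with hzdef
    have hx₀ne : x₀ ≠ 0 := by
      intro h
      rw [h, hν.zero] at hx₀
      norm_num at hx₀
    have hz : z ≠ 0 := by
      intro h
      apply hA
      apply (hN.1 A).mp
      rw [hNA, h, hν.zero]
    obtain ⟨g, hgle, hgz⟩ := exists_dual_functional hν z hz
    set i0 : Fin n := ⟨0, hn⟩ with hi0
    set P : Matrix (Fin n) (Fin n) ℂ := Rk x₀ (Pi.single i0 1) with hP
    set W : Matrix (Fin n) (Fin n) ℂ := Rk x₀ (fun j => g (Pi.single j 1)) with hW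
    have hWmul : ∀ u, W.mulVec u = g u • x₀ := by
      intro u
      rw [hW, Rk_mulVec, lin_eq_sum]
    have hNW : N W ≤ 1 := by
      rw [hNg W]
      apply Real.sSup_le _ zero_le_one
      rintro r ⟨u, hu, rfl⟩
      rw [hWmul, hν.2.1, hx₀, mul_one]
      exact (hgle u).trans_eq hu
    have hAP : A * P = Rk z (Pi.single i0 1) := by rw [hP, mul_Rk]
    have hWAP : W * (A * P) = ((ν z : ℝ) : ℂ) • P := by
      rw [hAP, hW, Rk_mul_Rk, lin_eq_sum g z, hgz, hP]
    have hPne : P ≠ 0 := by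
      intro h
      apply hx₀ne
      funext i
      have h2 : P i i0 = 0 := by rw [h]; rfl
      have h3 : P i i0 = x₀ i := by
        rw [hP]
        show x₀ i * (Pi.single i0 (1:ℂ) : Fin n → ℂ) i0 = x₀ i
        simp
      rw [h3] at h2
      exact h2
    have hN'Ppos : 0 < N' P :=
      lt_of_le_of_ne (hN'.nonneg P) (Ne.symm fun h => hPne ((hN'.1 P).mp h))
    have e1 : N' (((ν z : ℝ) : ℂ) • P) = ν z * N' P := by
      rw [hN'.2.1, Complex.norm_real, Real.norm_eq_abs, abs_of_nonneg (hν.nonneg z)]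
    have chain : ν z * N' P ≤ N' A * N' P := by
      calc ν z * N' P = N' (W * (A * P)) := by rw [hWAP, e1]
        _ ≤ N' W * N' (A * P) := hN'alg _ _
        _ ≤ N' W * (N' A * N' P) :=
            mul_le_mul_of_nonneg_left (hN'alg A P) (hN'.nonneg W)
        _ ≤ 1 * (N' A * N' P) :=
            mul_le_mul_of_nonneg_right ((hle W).trans hNW)
              (mul_nonneg (hN'.nonneg A) (hN'.nonneg P))
        _ = N' A * N' P := one_mul _
    have : ν z ≤ N' A := le_of_mul_le_mul_right chain hN'Ppos
    rw [hNA]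
    exact this
  · -- a minimal algebra norm is induced
    intro hmin
    set ν : (Fin n → ℂ) → ℝ := fun x => N (Cmat x) with hνdef
    have hν : IsNormCn ν := by
      refine ⟨fun x => ?_, fun c x => ?_, fun x y => ?_⟩
      · rw [hνdef]
        simp only
        rw [hN.1, Cmat_eq_zero hn]
      · show N (Cmat (c • x)) = ‖c‖ * N (Cmat x)
        rw [Cmat_smul, hN.2.1]
      · show N (Cmat (x + y)) ≤ N (Cmat x) + N (Cmat y)
        rw [Cmat_add]
        exact hN.2.2 _ _
    set G : Matrix (Fin n) (Fin n) ℂ → ℝ := gind ν ν with hGdef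
    -- the fundamental bound ν (A x) ≤ N A * ν x
    have key1 : ∀ (A : Matrix (Fin n) (Fin n) ℂ) (x), ν (A.mulVec x) ≤ N A * ν x := by
      intro A x
      show N (Cmat (A.mulVec x)) ≤ N A * N (Cmat x)
      rw [← mul_Cmat]
      exact halg A (Cmat x)
    have hbdd : ∀ A : Matrix (Fin n) (Fin n) ℂ,
        BddAbove {r : ℝ | ∃ x : Fin n → ℂ, ν x = 1 ∧ r = ν (A.mulVec x)} := by
      intro A
      refine ⟨N A, ?_⟩
      rintro r ⟨x, hx, rfl⟩
      have := key1 A x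
      rwa [hx, mul_one] at this
    have hmem : ∀ (A : Matrix (Fin n) (Fin n) ℂ) (x), ν x = 1 → ν (A.mulVec x) ≤ G A :=
      fun A x hx => le_csSup (hbdd A) ⟨x, hx, rfl⟩
    have hGle : ∀ A, G A ≤ N A := by
      intro A
      apply Real.sSup_le _ (hN.nonneg A)
      rintro r ⟨x, hx, rfl⟩
      have := key1 A x
      rwa [hx, mul_one] at this
    have hGnonneg : ∀ A, 0 ≤ G A := by
      intro A
      obtain ⟨x, hx⟩ := hν.exists_unit hn
      exact le_trans (hν.nonneg (A.mulVec x)) (hmem A x hx)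
    -- ν (A x) ≤ G A * ν x
    have key2 : ∀ (A : Matrix (Fin n) (Fin n) ℂ) (x), ν (A.mulVec x) ≤ G A * ν x := by
      intro A x
      by_cases hx : x = 0
      · subst hx
        rw [Matrix.mulVec_zero, hν.zero, mul_zero]
      · have hpos := hν.pos hx
        have h1 := hmem A _ (hν.normalize hx)
        rw [Matrix.mulVec_smul, hν.2.1, norm_real_inv_coe (hν.nonneg x)] at h1
        rw [inv_mul_le_iff₀ hpos] at h1
        rw [mul_comm (G A) (ν x)]
        exact h1
    have hGzero : G 0 = 0 := by
      apply le_antisymm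
      · apply Real.sSup_le _ le_rfl
        rintro r ⟨x, hx, rfl⟩
        rw [Matrix.zero_mulVec, hν.zero]
      · exact hGnonneg 0
    have hGsmul_le : ∀ (c : ℂ) (A), G (c • A) ≤ ‖c‖ * G A := by
      intro c A
      apply Real.sSup_le _ (mul_nonneg (norm_nonneg c) (hGnonneg A))
      rintro r ⟨x, hx, rfl⟩
      rw [Matrix.smul_mulVec, hν.2.1]
      exact mul_le_mul_of_nonneg_left (hmem A x hx) (norm_nonneg c)
    have hG : IsNormMn G := by
      refine ⟨fun A => ?_, fun c A => ?_, fun A B => ?_⟩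
      · constructor
        · intro hGA
          by_contra hA
          -- some column is nonzero
          have hcol : ∃ j, A.mulVec (Pi.single j 1) ≠ 0 := by
            by_contra hall
            push_neg at hall
            apply hA
            ext i j
            have := congrFun (hall j) i
            rw [Matrix.mulVec_single] at this
            simpa using this
          obtain ⟨j, hj⟩ := hcol
          have hxne : (Pi.single j 1 : Fin n → ℂ) ≠ 0 := by
            intro h
            apply hj
            rw [h, Matrix.mulVec_zero]
          set x := (Pi.single j (1:ℂ) : Fin n → ℂ) with hxdef
          have h2 := key2 A x
          have h3 : 0 < ν (A.mulVec x) := hν.pos hj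
          have h4 : 0 < G A * ν x := lt_of_lt_of_le h3 h2
          have : 0 < G A := by
            rcases mul_pos_iff.mp h4 with ⟨h, _⟩ | ⟨_, h⟩
            · exact h
            · exact absurd (hν.nonneg x) (not_le.mpr h)
          rw [hGA] at this
          exact lt_irrefl 0 this
        · rintro rfl
          exact hGzero
      · by_cases hc : c = 0
        · subst hc
          rw [zero_smul, hGzero, norm_zero, zero_mul]
        · apply le_antisymm (hGsmul_le c A)
          have h1 := hGsmul_le c⁻¹ (c • A)
          rw [inv_smul_smul₀ hc] at h1
          calc ‖c‖ * G A ≤ ‖c‖ * (‖c⁻¹‖ * G (c • A)) :=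
                mul_le_mul_of_nonneg_left h1 (norm_nonneg c)
            _ = (‖c‖ * ‖c‖⁻¹) * G (c • A) := by rw [norm_inv]; ring
            _ = G (c • A) := by
                rw [mul_inv_cancel₀ (norm_ne_zero_iff.mpr hc), one_mul]
      · apply Real.sSup_le _ (add_nonneg (hGnonneg A) (hGnonneg B))
        rintro r ⟨x, hx, rfl⟩
        rw [Matrix.add_mulVec]
        exact le_trans (hν.2.2 _ _) (add_le_add (hmem A x hx) (hmem B x hx))
    have hGsub : ∀ A B, G (A * B) ≤ G A * G B := by
      intro A B
      apply Real.sSup_le _ (mul_nonneg (hGnonneg A) (hGnonneg B))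
      rintro r ⟨x, hx, rfl⟩
      rw [← Matrix.mulVec_mulVec]
      calc ν (A.mulVec (B.mulVec x)) ≤ G A * ν (B.mulVec x) := key2 A _
        _ ≤ G A * (G B * ν x) :=
            mul_le_mul_of_nonneg_left (key2 B x) (hGnonneg A)
        _ = G A * G B := by rw [hx, mul_one]
    have hEq := hmin G hG hGsub hGle
    exact ⟨ν, hν, fun A => (hEq A).symm⟩
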